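/- arXiv:0802.1360 — 2 statements merged into one kernel-verified Lean document; each statement's English description precedes it below -/
import Mathlib

section
/- Every pseudo-diagonal channel is degradable; equivalently, every entanglement-breaking channel is anti-degradable. Concretely, if Φ^C(ρ) = Σ_k |x_k⟩⟨w_k| ρ |w_k⟩⟨x_k| is entanglement breaking and Φ(ρ) = Σ_{jk} |e_j⟩⟨e_k| ⟨x_j,x_k⟩ ⟨w_j|ρ|w_k⟩ is its complement, then the CP map Ψ with Kraus operators G_k = (1/‖x_k‖)|x_k⟩⟨e_k| satisfies Ψ∘Φ = Φ^C. -/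
open Matrix Kronecker BigOperators ComplexOrder

noncomputable def krausMap {n m ι : Type*} [Fintype n] [Fintype ι]
    (A : ι → Matrix m n ℂ) : Matrix n n ℂ →ₗ[ℂ] Matrix m m ℂ where
  toFun ρ := ∑ k, A k * ρ * (A k)ᴴ
  map_add' ρ σ := by
    simp [Matrix.mul_add, Matrix.add_mul, Finset.sum_add_distrib]
  map_smul' c ρ := by
    simp [Matrix.mul_smul, Matrix.smul_mul, Finset.smul_sum]

noncomputable def complementMap {n m ι : Type*} [Fintype n] [Fintype m] [Fintype ι]
    (A : ι → Matrix m n ℂ) : Matrix n n ℂ →ₗ[ℂ] Matrix ι ι ℂ where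
  toFun ρ := Matrix.of fun j k => (A j * ρ * (A k)ᴴ).trace
  map_add' ρ σ := by
    ext j k
    simp [Matrix.mul_add, Matrix.add_mul]
  map_smul' c ρ := by
    ext j k
    simp [Matrix.mul_smul, Matrix.smul_mul]

noncomputable def choi {n m : Type*} [Fintype n] [DecidableEq n]
    (Φ : Matrix n n ℂ →ₗ[ℂ] Matrix m m ℂ) : Matrix (n × m) (n × m) ℂ :=
  Matrix.of fun p q => Φ (Matrix.single p.1 q.1 1) p.2 q.2

def IsCPTP {n m : Type*} [Fintype n] [DecidableEq n] [Fintype m]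
    (Φ : Matrix n n ℂ →ₗ[ℂ] Matrix m m ℂ) : Prop :=
  (choi Φ).PosSemidef ∧ ∀ ρ, (Φ ρ).trace = ρ.trace

def IsKrausRep {n m ι : Type*} [Fintype n] [DecidableEq n] [Fintype m] [Fintype ι]
    (A : ι → Matrix m n ℂ) (Φ : Matrix n n ℂ →ₗ[ℂ] Matrix m m ℂ) : Prop :=
  (∀ ρ, Φ ρ = ∑ k, A k * ρ * (A k)ᴴ) ∧ ∑ k, (A k)ᴴ * A k = 1

def Degradable {n m : Type*} [Fintype n] [DecidableEq n] [Fintype m] [DecidableEq m]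
    (Φ : Matrix n n ℂ →ₗ[ℂ] Matrix m m ℂ) : Prop :=
  ∃ (e : ℕ) (A : Fin e → Matrix m n ℂ), IsKrausRep A Φ ∧
    ∃ Ψ : Matrix m m ℂ →ₗ[ℂ] Matrix (Fin e) (Fin e) ℂ,
      IsCPTP Ψ ∧ Ψ ∘ₗ Φ = complementMap A

def AntiDegradable {n m : Type*} [Fintype n] [DecidableEq n] [Fintype m] [DecidableEq m]
    (Φ : Matrix n n ℂ →ₗ[ℂ] Matrix m m ℂ) : Prop :=
  ∃ (e : ℕ) (A : Fin e → Matrix m n ℂ), IsKrausRep A Φ ∧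
    ∃ Λ : Matrix (Fin e) (Fin e) ℂ →ₗ[ℂ] Matrix m m ℂ,
      IsCPTP Λ ∧ Λ ∘ₗ complementMap A = Φ


lemma pd_entry {p q : ℕ} (a b : Fin q → ℂ) (k : Fin p) (M : Matrix (Fin p) (Fin p) ℂ)
    (i j : Fin q) :
    (vecMulVec a (Pi.single k 1) * M * (vecMulVec b (Pi.single k 1))ᴴ) i j
      = a i * M k k * star (b j) := by
  simp [Matrix.mul_apply, Matrix.vecMulVec_apply, Matrix.conjTranspose_apply,
    Pi.single_apply, Finset.sum_mul, Finset.mul_sum, apply_ite, mul_comm, mul_left_comm]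

lemma pd_sandwich_single {p q : ℕ} (a : Fin q → ℂ) (k : Fin p)
    (M : Matrix (Fin p) (Fin p) ℂ) :
    vecMulVec a (Pi.single k 1) * M * (vecMulVec a (Pi.single k 1))ᴴ
      = M k k • vecMulVec a (star a) := by
  ext i j
  rw [pd_entry]
  simp [Matrix.vecMulVec_apply]
  ring

lemma pd_rank_one {p q : ℕ} (x : Fin q → ℂ) (w : Fin p → ℂ) (ρ : Matrix (Fin p) (Fin p) ℂ) :
    vecMulVec x (star w) * ρ * (vecMulVec x (star w))ᴴ
      = (star w ⬝ᵥ ρ *ᵥ w) • vecMulVec x (star x) := by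
  ext i j
  simp [Matrix.mul_apply, Matrix.vecMulVec_apply, Matrix.conjTranspose_apply,
    dotProduct, Matrix.mulVec, Finset.sum_mul, Finset.mul_sum]
  ring_nf
  rw [Finset.sum_comm]
  congr 1; ext c; congr 1; ext b; ring

lemma pd_trace_vecMulVec {p : ℕ} (a b : Fin p → ℂ) : (vecMulVec a b).trace = a ⬝ᵥ b := by
  simp [Matrix.trace, Matrix.diag, Matrix.vecMulVec_apply, dotProduct]

lemma pd_dot_self_star {q : ℕ} (a : Fin q → ℂ) :
    a ⬝ᵥ star a = ((∑ i, Complex.normSq (a i) : ℝ) : ℂ) := by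
  push_cast
  simp [dotProduct, Complex.mul_conj]

lemma pd_inv_sqrt_mul_star (s : ℝ) (hs : 0 ≤ s) :
    ((Real.sqrt s : ℂ))⁻¹ * star ((Real.sqrt s : ℂ))⁻¹ = ((s : ℝ) : ℂ)⁻¹ := by
  rw [star_inv₀]
  rw [show star ((Real.sqrt s : ℝ) : ℂ) = ((Real.sqrt s : ℝ) : ℂ) from Complex.conj_ofReal _]
  rw [← mul_inv, ← Complex.ofReal_mul, Real.mul_self_sqrt hs]

lemma pd_zero_of_sum_normSq {q : ℕ} (a : Fin q → ℂ)
    (h : ∑ i, Complex.normSq (a i) = 0) : a = 0 := by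
  funext i
  have := (Finset.sum_eq_zero_iff_of_nonneg (fun i _ => Complex.normSq_nonneg (a i))).1 h i
    (Finset.mem_univ i)
  exact Complex.normSq_eq_zero.1 this

lemma pd_choi_krausMap_posSemidef {n m ι : Type*} [Fintype n] [DecidableEq n] [Fintype m]
    [Fintype ι] (A : ι → Matrix m n ℂ) : (choi (krausMap A)).PosSemidef := by
  have h : choi (krausMap A) = (Matrix.of fun (k : ι) (p : n × m) => star (A k p.2 p.1))ᴴ *
      (Matrix.of fun (k : ι) (p : n × m) => star (A k p.2 p.1)) := by
    ext p q
    simp [choi, krausMap, Matrix.mul_apply, Matrix.conjTranspose_apply, Matrix.sum_apply,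
      Matrix.single, Finset.sum_mul, Finset.mul_sum, ite_and, Finset.sum_ite_eq,
      Finset.sum_ite_eq', mul_comm]
  rw [h]
  exact Matrix.posSemidef_conjTranspose_mul_self _

/-- every pseudo-diagonal channel (the complement of an entanglement
breaking channel with rank-one Kraus operators `|x_k⟩⟨w_k|`) is degradable via the
CP map with Kraus operators `G_k = ‖x_k‖⁻¹ |x_k⟩⟨e_k|`; equivalently every
entanglement breaking channel is anti-degradable. -/
theorem pseudoDiagonal_degradable {dA dB dE : ℕ}
    (x : Fin dB → Fin dE → ℂ) (w : Fin dB → Fin dA → ℂ)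
    (hTP : ∑ k, (Matrix.vecMulVec (x k) (star (w k)))ᴴ *
        Matrix.vecMulVec (x k) (star (w k)) = 1) :
    (∀ ρ : Matrix (Fin dA) (Fin dA) ℂ,
      (∑ k, ((Real.sqrt (∑ i, Complex.normSq (x k i)) : ℂ)⁻¹ •
              Matrix.vecMulVec (x k) (Pi.single k 1)) *
            (Matrix.of fun j k' => (star (x j) ⬝ᵥ x k') * (star (w j) ⬝ᵥ ρ *ᵥ w k')) *
            ((Real.sqrt (∑ i, Complex.normSq (x k i)) : ℂ)⁻¹ •
              Matrix.vecMulVec (x k) (Pi.single k 1))ᴴ)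
        = ∑ k, Matrix.vecMulVec (x k) (star (w k)) * ρ *
            (Matrix.vecMulVec (x k) (star (w k)))ᴴ) ∧
    AntiDegradable (krausMap fun k => Matrix.vecMulVec (x k) (star (w k))) := by
  constructor
  · -- Part 1: the explicit composition identity
    intro ρ
    refine Finset.sum_congr rfl fun k _ => ?_
    rcases eq_or_ne (∑ i, Complex.normSq (x k i)) 0 with hs | hs
    · have hx : x k = 0 := pd_zero_of_sum_normSq _ hs
      ext i j
      simp [hx, Matrix.mul_apply, Matrix.vecMulVec_apply, Matrix.conjTranspose_apply]
    · have hs0 : (0:ℝ) ≤ ∑ i, Complex.normSq (x k i) :=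
        Finset.sum_nonneg fun i _ => Complex.normSq_nonneg _
      rw [Matrix.smul_mul, Matrix.conjTranspose_smul, Matrix.mul_smul, Matrix.smul_mul,
        smul_smul, pd_sandwich_single, pd_rank_one, smul_smul]
      congr 1
      rw [Matrix.of_apply]
      rw [show star (x k) ⬝ᵥ x k = x k ⬝ᵥ star (x k) from dotProduct_comm _ _, pd_dot_self_star]
      have hcc := pd_inv_sqrt_mul_star _ hs0
      have hss : ((∑ i, Complex.normSq (x k i) : ℝ) : ℂ) *
          ((∑ i, Complex.normSq (x k i) : ℝ) : ℂ)⁻¹ = 1 :=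
        mul_inv_cancel₀ (Complex.ofReal_ne_zero.2 hs)
      linear_combination (((∑ i, Complex.normSq (x k i) : ℝ) : ℂ) *
          (star (w k) ⬝ᵥ ρ *ᵥ w k)) * hcc + (star (w k) ⬝ᵥ ρ *ᵥ w k) * hss
  · -- Part 2: anti-degradability
    rcases Nat.eq_zero_or_pos dE with hE | hE
    · -- degenerate case: dE = 0 forces dA = 0
      subst hE
      have hA0 : dA = 0 := by
        by_contra h
        have h0 : 0 < dA := Nat.pos_of_ne_zero h
        have := congrFun (congrFun hTP ⟨0, h0⟩) ⟨0, h0⟩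
        simp [Matrix.sum_apply, Matrix.mul_apply, Matrix.one_apply] at this
      subst hA0
      refine ⟨0, fun k => Fin.elim0 k, ⟨fun ρ => ?_, Subsingleton.elim _ _⟩,
        0, ⟨?_, fun σ => ?_⟩, ?_⟩
      · rw [Subsingleton.elim ρ 0]
        simp
      · have : choi (0 : Matrix (Fin 0) (Fin 0) ℂ →ₗ[ℂ] Matrix (Fin 0) (Fin 0) ℂ) = 0 := by
          ext p q
          simp [choi]
        rw [this]
        exact Matrix.PosSemidef.zero
      · simp [Matrix.trace]
      · refine LinearMap.ext fun ρ => ?_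
        rw [Subsingleton.elim ρ 0]
        simp
    · -- main case: dE > 0
      set s : Fin dB → ℝ := fun k => ∑ i, Complex.normSq (x k i) with hs_def
      set v : Fin dB → Fin dE → ℂ := fun k =>
        if s k = 0 then Pi.single (⟨0, hE⟩ : Fin dE) 1
        else ((Real.sqrt (s k) : ℝ) : ℂ)⁻¹ • x k with hv_def
      have hs0 : ∀ k, (0:ℝ) ≤ s k := fun k =>
        Finset.sum_nonneg fun i _ => Complex.normSq_nonneg _
      have hxs : ∀ k, x k ⬝ᵥ star (x k) = ((s k : ℝ) : ℂ) := fun k => pd_dot_self_star _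
      have hvv : ∀ k, v k ⬝ᵥ star (v k) = 1 := by
        intro k
        rcases eq_or_ne (s k) 0 with h | h
        · simp [hv_def, h, dotProduct, Pi.single_apply]
        · simp only [hv_def, if_neg h]
          rw [show star (((Real.sqrt (s k) : ℝ) : ℂ)⁻¹ • x k)
                = star ((Real.sqrt (s k) : ℝ) : ℂ)⁻¹ • star (x k) from star_smul _ _,
            smul_dotProduct, dotProduct_smul, smul_eq_mul, smul_eq_mul, ← mul_assoc,
            pd_inv_sqrt_mul_star _ (hs0 k), hxs k,
            inv_mul_cancel₀ (Complex.ofReal_ne_zero.2 h)]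
      have hsv : ∀ k, ((s k : ℝ) : ℂ) • vecMulVec (v k) (star (v k))
          = vecMulVec (x k) (star (x k)) := by
        intro k
        rcases eq_or_ne (s k) 0 with h | h
        · have hx : x k = 0 := pd_zero_of_sum_normSq _ h
          ext i j
          simp [h, hx, Matrix.vecMulVec_apply]
        · ext i j
          simp only [hv_def, if_neg h, Matrix.smul_apply, Matrix.vecMulVec_apply,
            Pi.star_apply, Pi.smul_apply, smul_eq_mul, star_mul']
          have hcc := pd_inv_sqrt_mul_star (s k) (hs0 k)
          have hss : ((s k : ℝ) : ℂ) * ((s k : ℝ) : ℂ)⁻¹ = 1 :=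
            mul_inv_cancel₀ (Complex.ofReal_ne_zero.2 h)
          linear_combination (((s k : ℝ) : ℂ) * (x k i * star (x k j))) * hcc +
            (x k i * star (x k j)) * hss
      refine ⟨dB, fun k => Matrix.vecMulVec (x k) (star (w k)), ⟨fun ρ => rfl, hTP⟩,
        krausMap (fun k => vecMulVec (v k) (Pi.single k 1)),
        ⟨pd_choi_krausMap_posSemidef _, fun σ => ?_⟩, ?_⟩
      · show (∑ k, vecMulVec (v k) (Pi.single k 1) * σ *
            (vecMulVec (v k) (Pi.single k 1))ᴴ).trace = σ.trace
        rw [Matrix.trace_sum]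
        simp only [pd_sandwich_single, Matrix.trace_smul, pd_trace_vecMulVec, hvv,
          smul_eq_mul, mul_one]
        rfl
      · refine LinearMap.ext fun ρ => ?_
        show ∑ k, vecMulVec (v k) (Pi.single k 1) * (complementMap _ ρ) *
            (vecMulVec (v k) (Pi.single k 1))ᴴ
          = ∑ k, vecMulVec (x k) (star (w k)) * ρ * (vecMulVec (x k) (star (w k)))ᴴ
        refine Finset.sum_congr rfl fun k _ => ?_
        rw [pd_sandwich_single, pd_rank_one]
        have hM : (complementMap (fun k => Matrix.vecMulVec (x k) (star (w k))) ρ) k k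
            = (star (w k) ⬝ᵥ ρ *ᵥ w k) * ((s k : ℝ) : ℂ) := by
          show (vecMulVec (x k) (star (w k)) * ρ * (vecMulVec (x k) (star (w k)))ᴴ).trace = _
          rw [pd_rank_one, Matrix.trace_smul, pd_trace_vecMulVec, hxs, smul_eq_mul]
        rw [hM, mul_smul, hsv k]
end

section
/- The set of anti-degradable CPT channels from M_{d_A} to M_{d_B} is convex: if Φ_0 and Φ_1 are anti-degradable and 0 ≤ p ≤ 1, then (1−p)Φ_0 + pΦ_1 is anti-degradable. -/
open Matrix Kronecker BigOperators ComplexOrder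

/-! ### Auxiliary lemmas -/

noncomputable def subMap {e e' : ℕ} (f : Fin e → Fin e') :
    Matrix (Fin e') (Fin e') ℂ →ₗ[ℂ] Matrix (Fin e) (Fin e) ℂ where
  toFun X := X.submatrix f f
  map_add' X Y := by ext i j; simp
  map_smul' c X := by ext i j; simp

@[simp] lemma subMap_apply {e e' : ℕ} (f : Fin e → Fin e')
    (X : Matrix (Fin e') (Fin e') ℂ) : subMap f X = X.submatrix f f := rfl

lemma complementMap_apply {n m ι : Type*} [Fintype n] [Fintype m] [Fintype ι]
    (A : ι → Matrix m n ℂ) (ρ : Matrix n n ℂ) (j k : ι) :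
    complementMap A ρ j k = (A j * ρ * (A k)ᴴ).trace := rfl

lemma choi_comp_subMap {e e' b : ℕ} (f : Fin e → Fin e')
    (Λ : Matrix (Fin e) (Fin e) ℂ →ₗ[ℂ] Matrix (Fin b) (Fin b) ℂ) :
    choi (Λ ∘ₗ subMap f) =
      (Matrix.of fun (x : Fin e' × Fin b) (y : Fin e × Fin b) =>
        if x = (f y.1, y.2) then (1:ℂ) else 0) * choi Λ *
      (Matrix.of fun (x : Fin e' × Fin b) (y : Fin e × Fin b) =>
        if x = (f y.1, y.2) then (1:ℂ) else 0)ᴴ := by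
  ext ⟨q, m⟩ ⟨q', m'⟩
  have hE : (Matrix.single q q' (1:ℂ)).submatrix f f
      = ∑ i : Fin e, ∑ j : Fin e,
        (if q = f i ∧ q' = f j then (1:ℂ) else 0) • Matrix.single i j 1 := by
    ext u v
    simp only [Matrix.submatrix_apply, Matrix.sum_apply, Matrix.smul_apply,
      Matrix.single, Matrix.of_apply, smul_eq_mul, mul_ite, mul_one, mul_zero,
      ite_and]
    simp [Finset.sum_ite_eq']
  have lhs : choi (Λ ∘ₗ subMap f) (q, m) (q', m')
      = ∑ i : Fin e, ∑ j : Fin e,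
        (if q = f i ∧ q' = f j then (1:ℂ) else 0) *
          Λ (Matrix.single i j 1) m m' := by
    show (Λ ((Matrix.single q q' (1:ℂ)).submatrix f f)) m m' = _
    rw [hE]
    simp [Matrix.sum_apply, smul_eq_mul,
      apply_ite (fun X : Matrix (Fin e) (Fin e) ℂ => Λ X m m')]
  have rhs : ((Matrix.of fun (x : Fin e' × Fin b) (y : Fin e × Fin b) =>
        if x = (f y.1, y.2) then (1:ℂ) else 0) * choi Λ *
      (Matrix.of fun (x : Fin e' × Fin b) (y : Fin e × Fin b) =>
        if x = (f y.1, y.2) then (1:ℂ) else 0)ᴴ) (q, m) (q', m')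
      = ∑ i : Fin e, ∑ j : Fin e,
        (if q = f i ∧ q' = f j then (1:ℂ) else 0) *
          Λ (Matrix.single i j 1) m m' := by
    simp only [Matrix.mul_apply, Matrix.conjTranspose_apply, Matrix.of_apply,
      Finset.sum_mul, apply_ite (star : ℂ → ℂ), star_one, star_zero]
    rw [Finset.sum_comm, Fintype.sum_prod_type]
    refine Finset.sum_congr rfl fun i _ => ?_
    rw [Finset.sum_eq_single m]
    · rw [Fintype.sum_prod_type]
      refine Finset.sum_congr rfl fun j _ => ?_
      rw [Finset.sum_eq_single m']
      · simp only [choi, Matrix.of_apply, Prod.mk.injEq, and_true, ite_and, ite_mul,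
          one_mul, zero_mul, mul_ite, mul_one, mul_zero]
        by_cases h1 : q = f i <;> by_cases h2 : q' = f j <;> simp [h1, h2]
      · intro x _ hx
        simp [Prod.ext_iff, hx, Ne.symm hx]
      · simp
    · intro x _ hx
      simp [Prod.ext_iff, hx, Ne.symm hx]
    · simp
  rw [lhs, rhs]

lemma choi_psd_comp_subMap {e e' b : ℕ} (f : Fin e → Fin e')
    (Λ : Matrix (Fin e) (Fin e) ℂ →ₗ[ℂ] Matrix (Fin b) (Fin b) ℂ)
    (h : (choi Λ).PosSemidef) : (choi (Λ ∘ₗ subMap f)).PosSemidef := by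
  rw [choi_comp_subMap]
  exact h.mul_mul_conjTranspose_same _

lemma choi_add {n m : Type*} [Fintype n] [DecidableEq n]
    (Φ Ψ : Matrix n n ℂ →ₗ[ℂ] Matrix m m ℂ) : choi (Φ + Ψ) = choi Φ + choi Ψ := by
  ext x y
  simp [choi]

/-- the set of anti-degradable channels is convex. -/
theorem antiDegradable_convex {a b : ℕ}
    (Φ₀ Φ₁ : Matrix (Fin a) (Fin a) ℂ →ₗ[ℂ] Matrix (Fin b) (Fin b) ℂ)
    (h₀c : IsCPTP Φ₀) (h₁c : IsCPTP Φ₁)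
    (h₀ : AntiDegradable Φ₀) (h₁ : AntiDegradable Φ₁)
    (p : ℝ) (hp0 : 0 ≤ p) (hp1 : p ≤ 1) :
    AntiDegradable ((1 - (p : ℂ)) • Φ₀ + (p : ℂ) • Φ₁) := by
  obtain ⟨e₀, A₀, hA₀, Λ₀, hΛ₀c, hΛ₀⟩ := h₀
  obtain ⟨e₁, A₁, hA₁, Λ₁, hΛ₁c, hΛ₁⟩ := h₁
  set c₀ : ℂ := ((Real.sqrt (1 - p) : ℝ) : ℂ) with hc₀def
  set c₁ : ℂ := ((Real.sqrt p : ℝ) : ℂ) with hc₁def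
  have hs₀ : star c₀ * c₀ = 1 - (p : ℂ) := by
    rw [hc₀def, Complex.star_def, Complex.conj_ofReal, ← Complex.ofReal_mul,
      Real.mul_self_sqrt (by linarith)]
    push_cast; ring
  have hs₁ : star c₁ * c₁ = (p : ℂ) := by
    rw [hc₁def, Complex.star_def, Complex.conj_ofReal, ← Complex.ofReal_mul,
      Real.mul_self_sqrt hp0]
  have hs₀' : c₀ * star c₀ = 1 - (p : ℂ) := by rw [mul_comm]; exact hs₀
  have hs₁' : c₁ * star c₁ = (p : ℂ) := by rw [mul_comm]; exact hs₁
  set A : Fin (e₀ + e₁) → Matrix (Fin b) (Fin a) ℂ :=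
    fun k => Fin.addCases (fun i => c₀ • A₀ i) (fun i => c₁ • A₁ i) k with hAdef
  refine ⟨e₀ + e₁, A, ⟨?_, ?_⟩, ?_⟩
  · -- Kraus map formula
    intro ρ
    rw [Fin.sum_univ_add]
    simp only [hAdef, Fin.addCases_left, Fin.addCases_right, Matrix.conjTranspose_smul,
      Matrix.smul_mul, Matrix.mul_smul, smul_smul]
    rw [← Finset.smul_sum, ← Finset.smul_sum, ← hA₀.1 ρ, ← hA₁.1 ρ, hs₀, hs₁]
    simp
  · -- normalization
    rw [Fin.sum_univ_add]
    simp only [hAdef, Fin.addCases_left, Fin.addCases_right, Matrix.conjTranspose_smul,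
      Matrix.smul_mul, Matrix.mul_smul, smul_smul]
    rw [← Finset.smul_sum, ← Finset.smul_sum, hA₀.2, hA₁.2, hs₀', hs₁', ← add_smul]
    simp
  · -- anti-degrading map
    refine ⟨Λ₀ ∘ₗ subMap (Fin.castAdd e₁) + Λ₁ ∘ₗ subMap (Fin.natAdd e₀), ⟨?_, ?_⟩, ?_⟩
    · rw [choi_add]
      exact (choi_psd_comp_subMap _ _ hΛ₀c.1).add (choi_psd_comp_subMap _ _ hΛ₁c.1)
    · intro X
      simp only [LinearMap.add_apply, LinearMap.comp_apply, Matrix.trace_add,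
        hΛ₀c.2, hΛ₁c.2, subMap_apply]
      simp only [Matrix.trace, Matrix.diag, Matrix.submatrix_apply]
      rw [← Fin.sum_univ_add (f := fun i => X i i)]
    · apply LinearMap.ext
      intro ρ
      have e0 : subMap (Fin.castAdd e₁) (complementMap A ρ)
          = (1 - (p : ℂ)) • complementMap A₀ ρ := by
        ext j k
        simp only [subMap_apply, Matrix.submatrix_apply, Matrix.smul_apply,
          complementMap_apply, hAdef, Fin.addCases_left, Matrix.conjTranspose_smul,
          Matrix.smul_mul, Matrix.mul_smul, smul_smul, Matrix.trace_smul, smul_eq_mul]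
        rw [hs₀]
      have e1 : subMap (Fin.natAdd e₀) (complementMap A ρ)
          = (p : ℂ) • complementMap A₁ ρ := by
        ext j k
        simp only [subMap_apply, Matrix.submatrix_apply, Matrix.smul_apply,
          complementMap_apply, hAdef, Fin.addCases_right, Matrix.conjTranspose_smul,
          Matrix.smul_mul, Matrix.mul_smul, smul_smul, Matrix.trace_smul, smul_eq_mul]
        rw [hs₁]
      simp only [LinearMap.comp_apply, LinearMap.add_apply, LinearMap.smul_apply]
      rw [e0, e1, _root_.map_smul, _root_.map_smul]
      have f0 : Λ₀ (complementMap A₀ ρ) = Φ₀ ρ := by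
        have := LinearMap.congr_fun hΛ₀ ρ
        simpa using this
      have f1 : Λ₁ (complementMap A₁ ρ) = Φ₁ ρ := by
        have := LinearMap.congr_fun hΛ₁ ρ
        simpa using this
      rw [f0, f1]
end
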